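/- Token-level local directional regularization identity: let E be a real normed vector space, let A and c be real numbers, and let f : E → ℝ be differentiable at a point θ ∈ E. Define δ(θ) = sgn(A)·(f(θ) − c), where sgn is the real sign function with sgn(0) = 0. Then the map θ ↦ A·f(θ) + |A|·ψ(sgn(A)·(f(θ) − c)) is differentiable at θ, and its Fréchet derivative there equals w(δ(θ)) · A · Df(θ), where Df(θ) is the Fréchet derivative of f at θ. In other words, adding the directional regularizer |A|·ψ(δ(·)) rescales the raw policy-gradient contribution A·Df(θ) by exactly the factor w(δ(θ)). -/

import Mathlib

/-- The one-way weight function `w(δ) = max(ε_low, min(ε_high, exp(-δ)))`. -/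
noncomputable def owpoWeight (εlow εhigh : ℝ) (δ : ℝ) : ℝ :=
  max εlow (min εhigh (Real.exp (-δ)))

/-- The potential function `ψ(δ) = ∫_0^δ (w(u) − 1) du`. -/
noncomputable def owpoPotential (εlow εhigh : ℝ) (δ : ℝ) : ℝ :=
  ∫ u in (0 : ℝ)..δ, (owpoWeight εlow εhigh u - 1)

lemma owpoWeight_continuous (εlow εhigh : ℝ) : Continuous (owpoWeight εlow εhigh) := by
  unfold owpoWeight
  fun_prop

lemma owpoPotential_hasDerivAt (εlow εhigh δ : ℝ) :
    HasDerivAt (owpoPotential εlow εhigh) (owpoWeight εlow εhigh δ - 1) δ := by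
  have hc : Continuous (fun u => owpoWeight εlow εhigh u - 1) :=
    (owpoWeight_continuous εlow εhigh).sub continuous_const
  exact (hc.integral_hasStrictDerivAt 0 δ).hasDerivAt

/-- Token-level local directional regularization identity: adding the directional regularizer
`|A|·ψ(sgn(A)·(f(θ) − c))` to the raw term `A·f(θ)` yields a map whose Fréchet derivative at `θ`
is `w(δ(θ)) · A · Df(θ)`, where `δ(θ) = sgn(A)·(f(θ) − c)`. -/
theorem owpo_local_directional_regularization (εlow εhigh : ℝ)
    (hlow : 0 < εlow) (hlow1 : εlow < 1) (hhigh : 1 < εhigh)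
    {E : Type*} [NormedAddCommGroup E] [NormedSpace ℝ E]
    (A c : ℝ) (f : E → ℝ) (θ : E) (Df : E →L[ℝ] ℝ)
    (hf : HasFDerivAt f Df θ) :
    HasFDerivAt
      (fun θ' : E => A * f θ' +
        |A| * owpoPotential εlow εhigh (Real.sign A * (f θ' - c)))
      ((owpoWeight εlow εhigh (Real.sign A * (f θ - c)) * A) • Df) θ := by
  set s := Real.sign A with hs
  set δ := s * (f θ - c) with hδ
  -- inner map θ' ↦ s * (f θ' - c)
  have hinner : HasFDerivAt (fun θ' => s * (f θ' - c)) (s • Df) θ := by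
    simpa using ((hf.sub_const c).const_mul s)
  have hψ := owpoPotential_hasDerivAt εlow εhigh δ
  have hcomp : HasFDerivAt (fun θ' => owpoPotential εlow εhigh (s * (f θ' - c)))
      ((owpoWeight εlow εhigh δ - 1) • (s • Df)) θ := by
    have := hψ.comp_hasFDerivAt θ hinner; exact this
  have h1 : HasFDerivAt (fun θ' => A * f θ') (A • Df) θ := hf.const_mul A
  have h2 := h1.add (hcomp.const_mul |A|)
  have hAs : |A| * s = A := by
    rcases lt_trichotomy A 0 with h | h | h
    · simp [hs, Real.sign_of_neg h, abs_of_neg h]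
    · simp [h]
    · simp [hs, Real.sign_of_pos h, abs_of_pos h]
  convert h2 using 1
  case e'_8 => rfl
  case e'_9 => rfl
  case e'_11 => rfl
  ext x
  simp [ContinuousLinearMap.smul_apply, smul_eq_mul]
  linear_combination (-(owpoWeight εlow εhigh δ - 1) * Df x) * hAs
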